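/- For any distinct indices i_1,...,i_k ∈ {1,...,n} and any distinct indices j_1,...,j_k ∈ {1,...,n} such that the sets {i_1,...,i_k} and {j_1,...,j_k} have fewer than k−1 common elements, the mixed partial derivative ∂^{2k}Q/(∂z_{i_1}⋯∂z_{i_k}∂z_{j_1}⋯∂z_{j_k}) vanishes identically on ℂ^n. -/

import Mathlib

noncomputable section

/-- The determinant `d_{l 1, …, l k}` of the `k × k` matrix whose `m`-th column consists of
`b (l m) 1, …, b (l m) k`. -/
def dd {n k : ℕ} (b : Fin n → Fin k → ℂ) (l : Fin k → Fin n) : ℂ :=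
  Matrix.det (Matrix.of fun j m => b (l m) j)

/-- `f_{i_1,…,i_{k+1}}(z) = ∑_{l=1}^{k+1} (-1)^{l-1} d_{i_1,…,î_l,…,i_{k+1}} z_{i_l}`. -/
def fF {n k : ℕ} (b : Fin n → Fin k → ℂ) (z : Fin n → ℂ) (I : Fin (k + 1) → Fin n) : ℂ :=
  ∑ l : Fin (k + 1), (-1) ^ (l : ℕ) * dd b (I ∘ l.succAbove) * z (I l)

/-- The polynomial function
`Q(z) = (1/|a|^{2k+1}) ∑_{1 ≤ i_1 < … < i_{k+1} ≤ n}
  (∏_{m=1}^{k+1} a_{i_m}/d_{i_1,…,î_m,…,i_{k+1}}²) f_{i_1,…,i_{k+1}}(z)^{2k}` on `ℂⁿ`,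
the sum being over increasing enumerations of the `(k+1)`-element subsets of `{1,…,n}`. -/
def Qfun {n k : ℕ} (a : Fin n → ℂ) (b : Fin n → Fin k → ℂ) (z : Fin n → ℂ) : ℂ :=
  ((∑ i, a i) ^ (2 * k + 1))⁻¹ *
    ∑ s : {s : Finset (Fin n) // s.card = k + 1},
      (∏ m : Fin (k + 1),
        a (s.1.orderEmbOfFin s.2 m) / (dd b (⇑(s.1.orderEmbOfFin s.2) ∘ m.succAbove)) ^ 2) *
      (fF b z ⇑(s.1.orderEmbOfFin s.2)) ^ (2 * k)

/-- The iterated partial derivative `∂^{|L|} g / (∏_{i ∈ L} ∂z_i)` of a function `g : ℂⁿ → ℂ`. -/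
def iterD {n : ℕ} (L : List (Fin n)) (g : (Fin n → ℂ) → ℂ) : (Fin n → ℂ) → ℂ :=
  L.foldr (fun i h => fun z => fderiv ℂ h z (Pi.single i 1)) g

/-- The linear functional `z ↦ fF b z I`. -/
def lmap {n k : ℕ} (b : Fin n → Fin k → ℂ) (I : Fin (k + 1) → Fin n) :
    (Fin n → ℂ) →L[ℂ] ℂ :=
  ∑ l : Fin (k + 1), ((-1) ^ (l : ℕ) * dd b (I ∘ l.succAbove)) •
    (ContinuousLinearMap.proj (R := ℂ) (φ := fun _ : Fin n => ℂ) (I l))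

lemma lmap_apply {n k : ℕ} (b : Fin n → Fin k → ℂ) (I : Fin (k + 1) → Fin n)
    (z : Fin n → ℂ) : lmap b I z = fF b z I := by
  simp [lmap, fF, ContinuousLinearMap.sum_apply, mul_comm]

lemma lmap_single_eq_zero {n k : ℕ} (b : Fin n → Fin k → ℂ) (I : Fin (k + 1) → Fin n)
    (i : Fin n) (h : ∀ l, I l ≠ i) : lmap b I (Pi.single i 1) = 0 := by
  simp only [lmap, ContinuousLinearMap.sum_apply, ContinuousLinearMap.smul_apply,
    ContinuousLinearMap.proj_apply]
  refine Finset.sum_eq_zero fun l _ => ?_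
  rw [Pi.single_eq_of_ne (h l), smul_zero]

lemma hasFDerivAt_pow_clm {n : ℕ} (ℓ : (Fin n → ℂ) →L[ℂ] ℂ) (m : ℕ) (z : Fin n → ℂ) :
    HasFDerivAt (fun z => (ℓ z) ^ m) (((m : ℂ) * (ℓ z) ^ (m - 1)) • ℓ) z := by
  induction m with
  | zero =>
    convert hasFDerivAt_const (1 : ℂ) z using 2 <;> simp
    ext v; simp
  | succ m ih =>
    have h := ih.fun_mul (ℓ.hasFDerivAt (x := z))
    have hf : (fun z => ℓ z ^ (m+1)) = fun i => ℓ i ^ m * ℓ i := by funext y; ring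
    rw [hf]
    refine h.congr_fderiv ?_
    ext v
    simp only [ContinuousLinearMap.smul_apply, ContinuousLinearMap.add_apply, smul_eq_mul]
    cases m with
    | zero => simp
    | succ m =>
      simp only [Nat.add_sub_cancel]
      push_cast
      ring

lemma iterD_sum {n : ℕ} {S : Type*} [Fintype S] (A : ℂ) (w : S → ℂ)
    (ℓ : S → ((Fin n → ℂ) →L[ℂ] ℂ)) (m : ℕ) (L : List (Fin n)) :
    iterD L (fun z => A * ∑ s, w s * (ℓ s z) ^ m) = fun z =>
      A * ∑ s, w s * (m.descFactorial L.length : ℂ) *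
        (L.map (fun i => ℓ s (Pi.single i 1))).prod * (ℓ s z) ^ (m - L.length) := by
  induction L with
  | nil => simp [iterD]
  | cons i L ih =>
    have hstep : iterD (i :: L) (fun z => A * ∑ s, w s * (ℓ s z) ^ m)
        = fun z => fderiv ℂ (iterD L (fun z => A * ∑ s, w s * (ℓ s z) ^ m)) z
            (Pi.single i 1) := rfl
    rw [hstep]
    funext z
    rw [ih]
    set c : S → ℂ := fun s => w s * (m.descFactorial L.length : ℂ) *
        (L.map (fun i => ℓ s (Pi.single i 1))).prod with hc
    have hder : HasFDerivAt
        (fun z => A * ∑ s, c s * (ℓ s z) ^ (m - L.length))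
        (A • ∑ s, (c s * ((m - L.length : ℕ) : ℂ) * (ℓ s z) ^ (m - L.length - 1)) • ℓ s)
        z := by
      have h1 : HasFDerivAt (fun z => ∑ s, c s * (ℓ s z) ^ (m - L.length))
          (∑ s, (c s * ((m - L.length : ℕ) : ℂ) * (ℓ s z) ^ (m - L.length - 1)) • ℓ s) z := by
        refine HasFDerivAt.fun_sum fun s _ => ?_
        have := (hasFDerivAt_pow_clm (ℓ s) (m - L.length) z).const_mul (c s)
        refine this.congr_fderiv ?_
        rw [smul_smul]
        ring_nf
      simpa using h1.const_mul A
    rw [hder.fderiv]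
    simp only [ContinuousLinearMap.smul_apply, ContinuousLinearMap.sum_apply,
      smul_eq_mul, Finset.mul_sum, List.length_cons, List.map_cons, List.prod_cons]
    refine Finset.sum_congr rfl fun s _ => ?_
    rw [hc]
    have hdesc : (m.descFactorial (L.length + 1) : ℂ)
        = ((m - L.length : ℕ) : ℂ) * (m.descFactorial L.length : ℂ) := by
      rw [Nat.descFactorial_succ]; push_cast; ring
    rw [hdesc]
    have hexp : m - (L.length + 1) = m - L.length - 1 := by omega
    rw [hexp]
    ring

theorem stmt12 (n k : ℕ) (hk : 1 ≤ k) (hnk : k < n) (b : Fin n → Fin k → ℂ)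
    (hd : ∀ l : Fin k → Fin n, Function.Injective l → dd b l ≠ 0)
    (a : Fin n → ℂ) (ha : ∀ i, a i ≠ 0) (hsum : ∑ i, a i ≠ 0)
    (I J : Fin k → Fin n) (hI : Function.Injective I) (hJ : Function.Injective J)
    (hinter : (Finset.image I Finset.univ ∩ Finset.image J Finset.univ).card < k - 1) :
    ∀ z : Fin n → ℂ, iterD (List.ofFn I ++ List.ofFn J) (Qfun a b) z = 0 := by
  intro z
  set L : List (Fin n) := List.ofFn I ++ List.ofFn J with hL
  set S := {s : Finset (Fin n) // s.card = k + 1}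
  set A : ℂ := ((∑ i, a i) ^ (2 * k + 1))⁻¹
  set w : S → ℂ := fun s => ∏ m : Fin (k + 1),
      a (s.1.orderEmbOfFin s.2 m) / (dd b (⇑(s.1.orderEmbOfFin s.2) ∘ m.succAbove)) ^ 2
  set ℓ : S → ((Fin n → ℂ) →L[ℂ] ℂ) := fun s => lmap b (⇑(s.1.orderEmbOfFin s.2))
  have hQ : Qfun a b = fun z => A * ∑ s : S, w s * (ℓ s z) ^ (2 * k) := by
    funext z
    simp only [Qfun, ℓ, lmap_apply]
    rfl
  rw [hQ, iterD_sum]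
  -- show each summand vanishes since the product of coefficients contains a zero
  have hzero : ∀ s : S, (L.map (fun i => ℓ s (Pi.single i 1))).prod = 0 := by
    intro s
    -- the union of the images of I and J has more than k+1 elements
    have hcardI : (Finset.image I Finset.univ).card = k := by
      rw [Finset.card_image_of_injective _ hI, Finset.card_univ, Fintype.card_fin]
    have hcardJ : (Finset.image J Finset.univ).card = k := by
      rw [Finset.card_image_of_injective _ hJ, Finset.card_univ, Fintype.card_fin]
    have hunion : k + 1 < (Finset.image I Finset.univ ∪ Finset.image J Finset.univ).card := by
      have := Finset.card_union_add_card_inter (Finset.image I Finset.univ)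
        (Finset.image J Finset.univ)
      omega
    have hns : ¬ (Finset.image I Finset.univ ∪ Finset.image J Finset.univ) ⊆ s.1 := by
      intro hsub
      have := Finset.card_le_card hsub
      rw [s.2] at this
      omega
    obtain ⟨i, hiU, his⟩ := Finset.not_subset.mp hns
    have hiL : i ∈ L := by
      rw [Finset.mem_union] at hiU
      rw [hL, List.mem_append]
      rcases hiU with h | h
      · left
        obtain ⟨l, _, rfl⟩ := Finset.mem_image.mp h
        exact List.mem_ofFn.mpr ⟨l, rfl⟩
      · right
        obtain ⟨l, _, rfl⟩ := Finset.mem_image.mp h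
        exact List.mem_ofFn.mpr ⟨l, rfl⟩
    refine List.prod_eq_zero ?_
    refine List.mem_map.mpr ⟨i, hiL, ?_⟩
    refine lmap_single_eq_zero b _ i fun l hli => ?_
    exact his (hli ▸ Finset.orderEmbOfFin_mem s.1 s.2 l)
  simp only [hzero, mul_zero, zero_mul, Finset.sum_const_zero]
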